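/- Kron reduction preserves weight balancedness: if G is a weight-balanced directed graph (in-degree equals out-degree at each node), α ⊊ [n] with |α| ≥ 2 is such that the interior nodes have no self-loops (A_ii = 0 for i ∈ αᶜ), then the Kron-reduced graph G_red is also weight balanced. -/

import Mathlib

open Matrix Finset

/-- The submatrix of `A` with rows in `s` and columns in `t`. -/
noncomputable def subm {ι : Type*} [Fintype ι] [DecidableEq ι]
    (A : Matrix ι ι ℝ) (s t : Finset ι) : Matrix s t ℝ :=
  Matrix.of fun i j => A i j

/-- The Schur complement `A/A[αᶜ,αᶜ]`, i.e. the Kron reduction keeping the nodes of `α`. -/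
noncomputable def schur {ι : Type*} [Fintype ι] [DecidableEq ι]
    (A : Matrix ι ι ℝ) (α : Finset ι) : Matrix α α ℝ :=
  subm A α α - subm A α αᶜ * (subm A αᶜ αᶜ)⁻¹ * subm A αᶜ α

/-- The loopy Laplacian `Q = D - A + diag(Aᵢᵢ)` of the graph with adjacency matrix `A`. -/
noncomputable def loopyLap {n : ℕ} (A : Matrix (Fin n) (Fin n) ℝ) : Matrix (Fin n) (Fin n) ℝ :=
  Matrix.of fun i j => if i = j then ∑ k, A i k else -A i j

/-- The loop-less Laplacian `L = D - A` of the graph with adjacency matrix `A`. -/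
noncomputable def looplessLap {n : ℕ} (A : Matrix (Fin n) (Fin n) ℝ) : Matrix (Fin n) (Fin n) ℝ :=
  Matrix.of fun i j => if i = j then (∑ k, A i k) - A i i else -A i j

/-- `α` is a reachable subset: every interior node has a directed path to some boundary node. -/
def ReachableSubset {n : ℕ} (A : Matrix (Fin n) (Fin n) ℝ) (α : Finset (Fin n)) : Prop :=
  ∀ i ∉ α, ∃ j ∈ α, Relation.ReflTransGen (fun u v => 0 < A u v) i j


section Aux

variable {n : ℕ}

/-- row sums of the loopy Laplacian -/
lemma loopyLap_row_sum (A : Matrix (Fin n) (Fin n) ℝ) (i : Fin n) :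
    ∑ j, loopyLap A i j = A i i := by
  have h : ∀ j, loopyLap A i j = (if i = j then (∑ k, A i k) + A i j else 0) - A i j := by
    intro j; by_cases h : i = j
    · simp [loopyLap, h]
    · simp [loopyLap, h]
  simp_rw [h, Finset.sum_sub_distrib, Finset.sum_ite_eq, Finset.mem_univ, if_true]
  ring

lemma loopyLap_col_sum (A : Matrix (Fin n) (Fin n) ℝ)
    (hbal : ∀ i, ∑ j, A i j = ∑ j, A j i) (i : Fin n) :
    ∑ j, loopyLap A j i = A i i := by
  have h : ∀ j, loopyLap A j i = (if j = i then (∑ k, A i k) + A j i else 0) - A j i := by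
    intro j; by_cases h : j = i
    · subst h; simp [loopyLap]
    · simp [loopyLap, h]
  simp_rw [h, Finset.sum_sub_distrib, Finset.sum_ite_eq', Finset.mem_univ, if_true]
  rw [← hbal i]; ring

lemma sum_split (α : Finset (Fin n)) (f : Fin n → ℝ) :
    (∑ j : α, f ↑j) + (∑ j : (αᶜ : Finset (Fin n)), f ↑j) = ∑ j, f j := by
  rw [Finset.sum_coe_sort, Finset.sum_coe_sort, Finset.sum_add_sum_compl]

/-- Row sums of the Schur complement. -/
lemma schur_row_sum (A : Matrix (Fin n) (Fin n) ℝ)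
    (α : Finset (Fin n)) (hloop : ∀ i ∉ α, A i i = 0)
    (hinv : IsUnit (subm (loopyLap A) αᶜ αᶜ).det) (i : α) :
    ∑ j : α, schur (loopyLap A) α i j = A i i := by
  set Q := loopyLap A with hQ
  set B := subm Q α αᶜ
  set C := subm Q αᶜ αᶜ
  set D := subm Q αᶜ α
  have hDone : D *ᵥ (fun _ => (1:ℝ)) = C *ᵥ (fun _ => (-1:ℝ)) := by
    funext k
    have hk : (↑k : Fin n) ∉ α := Finset.mem_compl.mp k.2
    have hsum : (∑ j : α, Q ↑k ↑j) + (∑ j : (αᶜ : Finset (Fin n)), Q ↑k ↑j) = 0 := by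
      rw [sum_split α (fun j => Q ↑k j), hQ, loopyLap_row_sum, hloop _ hk]
    simp only [Matrix.mulVec, dotProduct, mul_one, mul_neg, mul_one]
    simp_rw [Finset.sum_neg_distrib]
    have hD : ∀ j : α, D k j = Q ↑k ↑j := fun j => rfl
    have hC : ∀ j : (αᶜ : Finset (Fin n)), C k j = Q ↑k ↑j := fun j => rfl
    simp_rw [hD, hC]
    linarith [hsum]
  have hMC : C⁻¹ *ᵥ (D *ᵥ (fun _ => (1:ℝ))) = (fun _ => (-1:ℝ)) := by
    rw [hDone, Matrix.mulVec_mulVec, Matrix.nonsing_inv_mul C hinv, Matrix.one_mulVec]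
  have hrow : ∑ j : α, schur Q α i j
      = (∑ j : α, subm Q α α i j) - ((B * C⁻¹ * D) *ᵥ (fun _ => (1:ℝ))) i := by
    simp only [schur, Matrix.sub_apply, Finset.sum_sub_distrib, Matrix.mulVec, dotProduct,
      mul_one]
    rfl
  rw [hrow]
  have : ((B * C⁻¹ * D) *ᵥ (fun _ => (1:ℝ))) i = -(∑ j : (αᶜ : Finset (Fin n)), B i j) := by
    rw [← Matrix.mulVec_mulVec, ← Matrix.mulVec_mulVec, hMC]
    simp [Matrix.mulVec, dotProduct]
  rw [this]
  have hB : ∀ j : (αᶜ : Finset (Fin n)), B i j = Q ↑i ↑j := fun j => rfl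
  have hAα : ∀ j : α, subm Q α α i j = Q ↑i ↑j := fun j => rfl
  simp_rw [hB, hAα, sub_neg_eq_add, sum_split α (fun j => Q ↑i j), hQ, loopyLap_row_sum]

/-- Column sums of the Schur complement. -/
lemma schur_col_sum (A : Matrix (Fin n) (Fin n) ℝ)
    (hbal : ∀ i, ∑ j, A i j = ∑ j, A j i)
    (α : Finset (Fin n)) (hloop : ∀ i ∉ α, A i i = 0)
    (hinv : IsUnit (subm (loopyLap A) αᶜ αᶜ).det) (i : α) :
    ∑ j : α, schur (loopyLap A) α j i = A i i := by
  set Q := loopyLap A with hQ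
  set B := subm Q α αᶜ
  set C := subm Q αᶜ αᶜ
  set D := subm Q αᶜ α
  have hBone : (fun _ => (1:ℝ)) ᵥ* B = (fun _ => (-1:ℝ)) ᵥ* C := by
    funext k
    have hk : (↑k : Fin n) ∉ α := Finset.mem_compl.mp k.2
    have hsum : (∑ j : α, Q ↑j ↑k) + (∑ j : (αᶜ : Finset (Fin n)), Q ↑j ↑k) = 0 := by
      rw [sum_split α (fun j => Q j ↑k), hQ, loopyLap_col_sum A hbal, hloop _ hk]
    simp only [Matrix.vecMul, dotProduct, one_mul, neg_one_mul]
    simp_rw [Finset.sum_neg_distrib]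
    have hB : ∀ j : α, B j k = Q ↑j ↑k := fun j => rfl
    have hC : ∀ j : (αᶜ : Finset (Fin n)), C j k = Q ↑j ↑k := fun j => rfl
    simp_rw [hB, hC]
    linarith [hsum]
  have hMC : ((fun _ => (1:ℝ)) ᵥ* B) ᵥ* C⁻¹ = (fun _ => (-1:ℝ)) := by
    rw [hBone, Matrix.vecMul_vecMul, Matrix.mul_nonsing_inv C hinv, Matrix.vecMul_one]
  have hcol : ∑ j : α, schur Q α j i
      = (∑ j : α, subm Q α α j i) - ((fun _ => (1:ℝ)) ᵥ* (B * C⁻¹ * D)) i := by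
    simp only [schur, Matrix.sub_apply, Finset.sum_sub_distrib, Matrix.vecMul, dotProduct,
      one_mul]
    rfl
  rw [hcol]
  have : ((fun _ => (1:ℝ)) ᵥ* (B * C⁻¹ * D)) i = -(∑ j : (αᶜ : Finset (Fin n)), D j i) := by
    rw [show B * C⁻¹ * D = B * C⁻¹ * D from rfl, ← Matrix.vecMul_vecMul, ← Matrix.vecMul_vecMul,
      hMC]
    simp [Matrix.vecMul, dotProduct]
  rw [this]
  have hD : ∀ j : (αᶜ : Finset (Fin n)), D j i = Q ↑j ↑i := fun j => rfl
  have hAα : ∀ j : α, subm Q α α j i = Q ↑j ↑i := fun j => rfl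
  simp_rw [hD, hAα, sub_neg_eq_add, sum_split α (fun j => Q j ↑i), hQ, loopyLap_col_sum A hbal]

end Aux

theorem kron_reduction_preserves_weight_balanced {n : ℕ} (A : Matrix (Fin n) (Fin n) ℝ)
    (hA : ∀ i j, 0 ≤ A i j) (hbal : ∀ i, ∑ j, A i j = ∑ j, A j i)
    (α : Finset (Fin n)) (hcard : 2 ≤ α.card) (hα : α ≠ Finset.univ)
    (hloop : ∀ i ∉ α, A i i = 0)
    (hinv : IsUnit (subm (loopyLap A) αᶜ αᶜ).det) :
    ∀ i : α,
      (∑ j : α, (if i = j then ∑ k, schur (loopyLap A) α i k else -(schur (loopyLap A) α i j)))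
        = ∑ j : α, (if j = i then ∑ k, schur (loopyLap A) α j k else -(schur (loopyLap A) α j i)) := by
  intro i
  set S := schur (loopyLap A) α with hS
  have hrow : ∑ j : α, S i j = A i i := schur_row_sum A α hloop hinv i
  have hcol : ∑ j : α, S j i = A i i := schur_col_sum A hbal α hloop hinv i
  have h1 : ∀ j : α, (if i = j then ∑ k, S i k else -(S i j))
      = (if i = j then (∑ k, S i k) + S i j else 0) - S i j := by
    intro j; by_cases h : i = j
    · simp [h]
    · simp [h]
  have h2 : ∀ j : α, (if j = i then ∑ k, S j k else -(S j i))
      = (if j = i then (∑ k, S i k) + S j i else 0) - S j i := by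
    intro j; by_cases h : j = i
    · subst h; simp
    · simp [h]
  simp_rw [h1, h2, Finset.sum_sub_distrib, Finset.sum_ite_eq, Finset.sum_ite_eq',
    Finset.mem_univ, if_true, hrow, hcol]
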